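/- arXiv:2107.05069 — 2 statements merged into one kernel-verified Lean document; each statement's English description precedes it below -/
import Mathlib

section
/- Let ⊢ be a logic whose language comprises constant symbols only, with constants {c_i : i < α}. Then ⊢ has an algebraic semantics if and only if one of the following holds: (i) ∅ ⊢ x or ∅ ⊢ c_i for some i; (ii) x ⊢ c_i and x ⊢ c_j for some i ≠ j; (iii) x ⊢ c_k for some k, and c_i ⊣⊢ c_j for some i ≠ j. -/
/-- An algebraic signature: a type of operation symbols with arities. -/
structure Sig : Type 1 where
  Op : Type
  ar : Op → ℕ

/-- Formulas (terms) over a signature, with variables indexed by ℕ. -/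
inductive Fm (L : Sig) : Type where
  | var : ℕ → Fm L
  | op : (f : L.Op) → (Fin (L.ar f) → Fm L) → Fm L

/-- An algebra for the signature `L`. -/
structure Alg (L : Sig) : Type 1 where
  carrier : Type
  interp : (f : L.Op) → (Fin (L.ar f) → carrier) → carrier

/-- Evaluation of a formula in an algebra under a valuation of the variables. -/
def Fm.eval {L : Sig} (A : Alg L) (v : ℕ → A.carrier) : Fm L → A.carrier
  | .var n => v n
  | .op f as => A.interp f (fun i => (as i).eval A v)

/-- Substitution (endomorphism of the formula algebra). -/
def Fm.subst {L : Sig} (σ : ℕ → Fm L) : Fm L → Fm L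
  | .var n => σ n
  | .op f as => .op f (fun i => (as i).subst σ)

/-- The set of variables occurring in a formula. -/
def Fm.vars {L : Sig} : Fm L → Set ℕ
  | .var n => {n}
  | .op _ as => ⋃ i, (as i).vars

/-- Substitute the formula `ψ` for the variable `v` in `φ`. -/
def Fm.subst1 {L : Sig} (v : ℕ) (ψ : Fm L) (φ : Fm L) : Fm L :=
  φ.subst (fun n => if n = v then ψ else .var n)

/-- A logic: a substitution-invariant (finitary or not) consequence relation on formulas. -/
structure Logic (L : Sig) : Type where
  deriv : Set (Fm L) → Fm L → Prop
  axm : ∀ Γ φ, φ ∈ Γ → deriv Γ φ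
  mono : ∀ Γ Δ φ, Γ ⊆ Δ → deriv Γ φ → deriv Δ φ
  cut : ∀ Γ Δ φ, deriv Γ φ → (∀ γ ∈ Γ, deriv Δ γ) → deriv Δ φ
  substInv : ∀ (σ : ℕ → Fm L) Γ φ, deriv Γ φ → deriv (Fm.subst σ '' Γ) (φ.subst σ)

/-- A logical matrix: an algebra with a set of designated elements. -/
structure LMatrix (L : Sig) : Type 1 where
  alg : Alg L
  F : Set alg.carrier

/-- The consequence relation induced by a class of matrices. -/
def inducedBy {L : Sig} (M : Set (LMatrix L)) (Γ : Set (Fm L)) (φ : Fm L) : Prop :=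
  ∀ m ∈ M, ∀ v : ℕ → m.alg.carrier,
    (∀ γ ∈ Γ, γ.eval m.alg v ∈ m.F) → φ.eval m.alg v ∈ m.F

/-- `M` is a matrix semantics for the logic `ℒ`. -/
def IsMatrixSemantics {L : Sig} (ℒ : Logic L) (M : Set (LMatrix L)) : Prop :=
  ∀ Γ φ, ℒ.deriv Γ φ ↔ inducedBy M Γ φ

/-- Equational consequence relative to a class of algebras (equations as pairs of formulas). -/
def eqConseq {L : Sig} (K : Set (Alg L)) (Θ : Set (Fm L × Fm L)) (e : Fm L × Fm L) : Prop :=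
  ∀ A ∈ K, ∀ v : ℕ → A.carrier,
    (∀ p ∈ Θ, p.1.eval A v = p.2.eval A v) → e.1.eval A v = e.2.eval A v

/-- `τ(φ)`: the result of substituting `φ` for the variable `x` (= variable 0) in each
equation of `τ`. -/
def tauApp {L : Sig} (τ : Set (Fm L × Fm L)) (φ : Fm L) : Set (Fm L × Fm L) :=
  (fun e => (Fm.subst1 0 φ e.1, Fm.subst1 0 φ e.2)) '' τ

/-- `τ[Γ]`. -/
def tauAppSet {L : Sig} (τ : Set (Fm L × Fm L)) (Γ : Set (Fm L)) : Set (Fm L × Fm L) :=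
  ⋃ γ ∈ Γ, tauApp τ γ

/-- `τ` is a set of equations in the single variable `x` (= variable 0). -/
def IsUnivalent {L : Sig} (τ : Set (Fm L × Fm L)) : Prop :=
  ∀ e ∈ τ, e.1.vars ⊆ ({0} : Set ℕ) ∧ e.2.vars ⊆ ({0} : Set ℕ)

/-- `K` is a `τ`-algebraic semantics for `ℒ`: `Γ ⊢ φ` iff `τ[Γ] ⊨_K τ(φ)`. -/
def IsTauAlgSem {L : Sig} (ℒ : Logic L) (τ : Set (Fm L × Fm L)) (K : Set (Alg L)) : Prop :=
  IsUnivalent τ ∧ ∀ Γ φ, ℒ.deriv Γ φ ↔ ∀ e ∈ tauApp τ φ, eqConseq K (tauAppSet τ Γ) e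

/-- `ℒ` has an algebraic semantics (admits an equational completeness theorem). -/
def HasAlgSem {L : Sig} (ℒ : Logic L) : Prop :=
  ∃ (τ : Set (Fm L × Fm L)) (K : Set (Alg L)), IsTauAlgSem ℒ τ K

/-- `θ` is a congruence of the algebra `A`. -/
def IsCong {L : Sig} (A : Alg L) (θ : A.carrier → A.carrier → Prop) : Prop :=
  Equivalence θ ∧ ∀ (f : L.Op) (as bs : Fin (L.ar f) → A.carrier),
    (∀ i, θ (as i) (bs i)) → θ (A.interp f as) (A.interp f bs)

/-- The congruence of `A` generated by `X` (least congruence containing `X`). -/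
def congGen {L : Sig} (A : Alg L) (X : Set (A.carrier × A.carrier))
    (a c : A.carrier) : Prop :=
  ∀ θ, IsCong A θ → (∀ p ∈ X, θ p.1 p.2) → θ a c

/-- `p` is a unary polynomial function of `A`: `p(a) = φ^A(a, c⃗)` for a formula `φ(x, y⃗)`
and parameters `c⃗` from `A`. -/
def IsUnaryPoly {L : Sig} (A : Alg L) (p : A.carrier → A.carrier) : Prop :=
  ∃ (φ : Fm L) (c : ℕ → A.carrier),
    ∀ a, p a = φ.eval A (fun n => if n = 0 then a else c n)

/-- Compatibility of a relation with a set. -/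
def Compatible {L : Sig} (A : Alg L) (θ : A.carrier → A.carrier → Prop)
    (F : Set A.carrier) : Prop :=
  ∀ a c, θ a c → a ∈ F → c ∈ F

/-- The Leibniz congruence `Ω^A F`: the largest congruence of `A` compatible with `F`
(realized as the union of all congruences compatible with `F`). -/
def leibniz {L : Sig} (A : Alg L) (F : Set A.carrier) (a c : A.carrier) : Prop :=
  ∃ θ, IsCong A θ ∧ Compatible A θ F ∧ θ a c

/-- The formula algebra. -/
def FmAlg (L : Sig) : Alg L :=
  ⟨Fm L, fun f as => Fm.op f as⟩

/-- `ℒ` has no theorems. -/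
def LacksTheorems {L : Sig} (ℒ : Logic L) : Prop :=
  ¬ ∃ φ, ℒ.deriv ∅ φ

/-- `ℒ` is assertional. -/
def Assertional {L : Sig} (ℒ : Logic L) : Prop :=
  ∃ (M : Set (LMatrix L)) (φ : Fm L), IsMatrixSemantics ℒ M ∧ φ.vars ⊆ ({0} : Set ℕ) ∧
    ∀ m ∈ M, ∃ c : m.alg.carrier,
      (∀ a : m.alg.carrier, φ.eval m.alg (fun _ => a) = c) ∧ m.F = {c}

/-- `ℒ` is almost assertional. -/
def AlmostAssertional {L : Sig} (ℒ : Logic L) : Prop :=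
  LacksTheorems ℒ ∧
  ∃ (M : Set (LMatrix L)) (φ : Fm L), IsMatrixSemantics ℒ M ∧ φ.vars ⊆ ({0} : Set ℕ) ∧
    ∀ m ∈ M, m.F.Nonempty → ∃ c : m.alg.carrier,
      (∀ a : m.alg.carrier, φ.eval m.alg (fun _ => a) = c) ∧ m.F = {c}

/-- Two formulas are logically equivalent in `ℒ`. -/
def LogEquiv {L : Sig} (ℒ : Logic L) (ε δ : Fm L) : Prop :=
  ∀ (φ : Fm L) (v : ℕ),
    ℒ.deriv {Fm.subst1 v ε φ} (Fm.subst1 v δ φ) ∧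
    ℒ.deriv {Fm.subst1 v δ φ} (Fm.subst1 v ε φ)

/-- The constant formula associated with a nullary operation symbol. -/
def constFm {L : Sig} (h : ∀ f : L.Op, L.ar f = 0) (c : L.Op) : Fm L :=
  Fm.op c (fun i => (Fin.cast (h c) i).elim0)


section Infra
variable {L : Sig} (h : ∀ f : L.Op, L.ar f = 0)
include h

lemma ar_empty (f : L.Op) : IsEmpty (Fin (L.ar f)) := by
  rw [h f]; infer_instance

lemma fn_eq {X : Sort*} (f : L.Op) (as bs : Fin (L.ar f) → X) : as = bs :=
  funext fun i => ((ar_empty h f).false i).elim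

lemma subst_op (σ : ℕ → Fm L) (m : L.Op) (as : Fin (L.ar m) → Fm L) :
    Fm.subst σ (Fm.op m as) = Fm.op m as := by
  show Fm.op m (fun i => (as i).subst σ) = Fm.op m as
  exact congrArg _ (fn_eq h m _ _)

lemma subst1_op (ψ : Fm L) (m : L.Op) (as : Fin (L.ar m) → Fm L) :
    Fm.subst1 0 ψ (Fm.op m as) = Fm.op m as := subst_op h _ m as

lemma subst_var (φ : Fm L) : φ.subst Fm.var = φ := by
  cases φ with
  | var n => rfl
  | op m as => exact subst_op h _ m as

lemma subst1_var0_id (φ : Fm L) : Fm.subst1 0 (Fm.var 0) φ = φ := by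
  unfold Fm.subst1
  have : (fun n => if n = 0 then Fm.var 0 else Fm.var n) = (Fm.var : ℕ → Fm L) := by
    funext n; by_cases hn : n = 0 <;> simp [hn]
  rw [this]; exact subst_var h φ

lemma subst1_var0_self (φ : Fm L) : Fm.subst1 0 φ (Fm.var 0) = φ := by
  simp [Fm.subst1, Fm.subst]

lemma eval_op_eq (A : Alg L) (v w : ℕ → A.carrier) (m : L.Op)
    (as bs : Fin (L.ar m) → Fm L) :
    (Fm.op m as).eval A v = (Fm.op m bs).eval A w := by
  show A.interp m _ = A.interp m _
  exact congrArg _ (fn_eq h m _ _)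

lemma eval_FmAlg (v : ℕ → Fm L) (φ : Fm L) : φ.eval (FmAlg L) v = φ.subst v := by
  cases φ with
  | var n => rfl
  | op m as =>
    show Fm.op m _ = Fm.op m _
    exact congrArg _ (fn_eq h m _ _)

lemma vars_op (m : L.Op) (as : Fin (L.ar m) → Fm L) : (Fm.op m as).vars = ∅ := by
  show (⋃ i, (as i).vars) = ∅
  haveI := ar_empty h m
  exact Set.iUnion_of_empty _

lemma constFm_eq (m : L.Op) (as : Fin (L.ar m) → Fm L) : constFm h m = Fm.op m as :=
  congrArg _ (fn_eq h m _ _)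

lemma constFm_inj {i j : L.Op} (e : constFm h i = constFm h j) : i = j := by
  injection e

lemma classify (ψ : Fm L) (hv : ψ.vars ⊆ ({0} : Set ℕ)) :
    ψ = Fm.var 0 ∨ ∃ m, ψ = constFm h m := by
  cases ψ with
  | var n =>
    left
    have : n ∈ ({0} : Set ℕ) := hv (by show n ∈ ({n} : Set ℕ); simp)
    simp at this; rw [this]
  | op m as => exact Or.inr ⟨m, (constFm_eq h m as).symm⟩

lemma mem_tauAppSet {τ : Set (Fm L × Fm L)} {Γ : Set (Fm L)} {p : Fm L × Fm L} :
    p ∈ tauAppSet τ Γ ↔ ∃ γ ∈ Γ, p ∈ tauApp τ γ := by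
  simp [tauAppSet]

lemma tauApp_var0 (τ : Set (Fm L × Fm L)) : tauApp τ (Fm.var 0) = τ := by
  unfold tauApp
  have : (fun e : Fm L × Fm L => (Fm.subst1 0 (Fm.var 0) e.1, Fm.subst1 0 (Fm.var 0) e.2))
      = id := by
    funext e; simp [subst1_var0_id h]
  rw [this, Set.image_id]

end Infra

section Quot
variable {L : Sig} (h : ∀ f : L.Op, L.ar f = 0)
set_option linter.unusedSectionVars false

/-- canonical empty argument list -/
def noArgs (f : L.Op) : Fin (L.ar f) → Fm L := fun i => ((ar_empty h f).false i).elim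

/-- quotient algebra of the formula algebra by a setoid -/
def QA (s : Setoid (Fm L)) : Alg L :=
  ⟨Quotient s, fun f _ => Quotient.mk s (Fm.op f (noArgs h f))⟩

lemma QA_eval (s : Setoid (Fm L)) (v : ℕ → Fm L) (φ : Fm L) :
    φ.eval (QA h s) (fun n => Quotient.mk s (v n)) = Quotient.mk s (φ.subst v) := by
  cases φ with
  | var n => rfl
  | op m as =>
    show Quotient.mk s (Fm.op m (noArgs h m)) = Quotient.mk s (Fm.op m _)
    exact congrArg _ (congrArg _ (fn_eq h m _ _))

lemma QA_eval_out (s : Setoid (Fm L)) (v : ℕ → (QA h s).carrier) (φ : Fm L) :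
    φ.eval (QA h s) v = Quotient.mk s (φ.subst (fun n => (v n).out)) := by
  conv_lhs => rw [show v = fun n => Quotient.mk s ((v n).out) from
    funext fun n => (Quotient.out_eq (v n)).symm]
  exact QA_eval h s _ φ

end Quot

section LogicHelpers
variable {L : Sig} (h : ∀ f : L.Op, L.ar f = 0) (ℒ : Logic L)
set_option linter.unusedSectionVars false

def IsTheory (T : Set (Fm L)) : Prop := ∀ φ, ℒ.deriv T φ → φ ∈ T

def Lclosure (Γ : Set (Fm L)) : Set (Fm L) := {φ | ℒ.deriv Γ φ}

lemma closure_isTheory (Γ : Set (Fm L)) : IsTheory ℒ (Lclosure ℒ Γ) := by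
  intro φ hd
  exact ℒ.cut _ _ _ hd (fun γ hγ => hγ)

lemma mem_closure {Γ : Set (Fm L)} {φ : Fm L} : φ ∈ Lclosure ℒ Γ ↔ ℒ.deriv Γ φ := Iff.rfl

lemma theory_deriv {T : Set (Fm L)} (hT : IsTheory ℒ T) {Δ : Set (Fm L)} {φ : Fm L}
    (hsub : Δ ⊆ T) (hd : ℒ.deriv Δ φ) : φ ∈ T :=
  hT φ (ℒ.cut _ _ _ hd (fun γ hγ => ℒ.axm _ _ (hsub hγ)))

/-- from `x ⊢ ψc` (ψc a constant) infer `γ ⊢ ψc` for any `γ` -/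
lemma derivSingleConst (m : L.Op) (hx : ℒ.deriv {Fm.var 0} (constFm h m)) (γ : Fm L) :
    ℒ.deriv {γ} (constFm h m) := by
  have := ℒ.substInv (fun _ => γ) _ _ hx
  rw [Set.image_singleton] at this
  rwa [show (constFm h m).subst (fun _ => γ) = constFm h m from subst_op h _ m _] at this

/-- from `ψ ⊢ χ` and `Γ ⊢ ψ` infer `Γ ⊢ χ` -/
lemma deriv_cut1 {ψ χ : Fm L} {Γ : Set (Fm L)} (h1 : ℒ.deriv {ψ} χ)
    (h2 : ℒ.deriv Γ ψ) : ℒ.deriv Γ χ :=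
  ℒ.cut _ _ _ h1 (fun γ hγ => by rw [Set.mem_singleton_iff] at hγ; rw [hγ]; exact h2)

/-- constant substituted stays itself -/
lemma subst_constFm (σ : ℕ → Fm L) (m : L.Op) : (constFm h m).subst σ = constFm h m :=
  subst_op h σ m _

lemma subst1_constFm (ψ : Fm L) (m : L.Op) : Fm.subst1 0 ψ (constFm h m) = constFm h m :=
  subst_op h _ m _

end LogicHelpers

section LogicHelpers2
variable {L : Sig} (ℒ : Logic L)
set_option linter.unusedSectionVars false

lemma deriv_of_mem {Γ : Set (Fm L)} {γ₀ ψ : Fm L} (hγ : γ₀ ∈ Γ)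
    (hd : ℒ.deriv {γ₀} ψ) : ℒ.deriv Γ ψ :=
  ℒ.cut _ _ _ hd (fun γ' hγ' => by
    rw [Set.mem_singleton_iff] at hγ'; rw [hγ']; exact ℒ.axm _ _ hγ)

end LogicHelpers2

section Forward
variable {L : Sig} (h : ∀ f : L.Op, L.ar f = 0) (ℒ : Logic L)
  {τ : Set (Fm L × Fm L)} {K : Set (Alg L)}
set_option linter.unusedSectionVars false

lemma tauApp_elim {τ : Set (Fm L × Fm L)} {φ : Fm L} {e : Fm L × Fm L}
    (he : e ∈ tauApp τ φ) :
    ∃ p ∈ τ, e.1 = Fm.subst1 0 φ p.1 ∧ e.2 = Fm.subst1 0 φ p.2 := by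
  rcases he with ⟨p, hp, rfl⟩
  exact ⟨p, hp, rfl, rfl⟩

lemma tauApp_intro {τ : Set (Fm L × Fm L)} {φ : Fm L} {p : Fm L × Fm L} (hp : p ∈ τ) :
    (Fm.subst1 0 φ p.1, Fm.subst1 0 φ p.2) ∈ tauApp τ φ := ⟨p, hp, rfl⟩

/-- Lemma A: a mixed equation `x ≈ c_k` (either orientation) in τ yields `x ⊢ c_k`. -/
lemma lemA (hu : IsUnivalent τ)
    (hiff : ∀ Γ φ, ℒ.deriv Γ φ ↔ ∀ e ∈ tauApp τ φ, eqConseq K (tauAppSet τ Γ) e)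
    (k : L.Op)
    (hm : (Fm.var 0, constFm h k) ∈ τ ∨ (constFm h k, Fm.var 0) ∈ τ) :
    ℒ.deriv {Fm.var 0} (constFm h k) := by
  rw [hiff]
  intro e he A hA v hprem
  have hprem' : ∀ p ∈ τ, p.1.eval A v = p.2.eval A v := by
    intro p hp
    have : p ∈ tauAppSet τ {Fm.var 0} := by
      rw [mem_tauAppSet h]
      exact ⟨Fm.var 0, rfl, by rw [tauApp_var0 h]; exact hp⟩
    exact hprem p this
  have hv0 : v 0 = (constFm h k).eval A v := by
    rcases hm with hm | hm
    · exact hprem' _ hm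
    · exact (hprem' _ hm).symm
  have key : ∀ ψ : Fm L, ψ.vars ⊆ ({0} : Set ℕ) →
      (Fm.subst1 0 (constFm h k) ψ).eval A v = ψ.eval A v := by
    intro ψ hψ
    rcases classify h ψ hψ with rfl | ⟨m, rfl⟩
    · rw [subst1_var0_self h]
      show _ = v 0
      rw [hv0]
    · rw [subst1_constFm h]
  obtain ⟨p, hp, h1, h2⟩ := tauApp_elim he
  rw [h1, h2, key p.1 (hu p hp).1, key p.2 (hu p hp).2]
  exact hprem' p hp

/-- Lemma B: a constant equation `c_i ≈ c_j` in τ yields `c_i ⊢ c_j`. -/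
lemma lemB (hu : IsUnivalent τ)
    (hiff : ∀ Γ φ, ℒ.deriv Γ φ ↔ ∀ e ∈ tauApp τ φ, eqConseq K (tauAppSet τ Γ) e)
    (i j : L.Op) (hm : (constFm h i, constFm h j) ∈ τ) :
    ℒ.deriv {constFm h i} (constFm h j) := by
  rw [hiff]
  intro e he A hA v hprem
  have hprem' : ∀ p ∈ τ,
      (Fm.subst1 0 (constFm h i) p.1).eval A v
        = (Fm.subst1 0 (constFm h i) p.2).eval A v := by
    intro p hp
    exact hprem (Fm.subst1 0 (constFm h i) p.1, Fm.subst1 0 (constFm h i) p.2)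
      (by rw [mem_tauAppSet h]; exact ⟨constFm h i, rfl, tauApp_intro hp⟩)
  have hij : (constFm h i).eval A v = (constFm h j).eval A v := by
    have := hprem' _ hm
    rwa [subst1_constFm h, subst1_constFm h] at this
  have key : ∀ ψ : Fm L, ψ.vars ⊆ ({0} : Set ℕ) →
      (Fm.subst1 0 (constFm h j) ψ).eval A v
        = (Fm.subst1 0 (constFm h i) ψ).eval A v := by
    intro ψ hψ
    rcases classify h ψ hψ with rfl | ⟨m, rfl⟩
    · rw [subst1_var0_self h, subst1_var0_self h]; exact hij.symm
    · rw [subst1_constFm h, subst1_constFm h]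
  obtain ⟨p, hp, h1, h2⟩ := tauApp_elim he
  rw [h1, h2, key p.1 (hu p hp).1, key p.2 (hu p hp).2]
  exact hprem' p hp

/-- Lemma C: if every equation of τ is `x ≈ x` or between constants, then `y ⊢ x`. -/
lemma lemC (hu : IsUnivalent τ)
    (hiff : ∀ Γ φ, ℒ.deriv Γ φ ↔ ∀ e ∈ tauApp τ φ, eqConseq K (tauAppSet τ Γ) e)
    (hnomix : ∀ p ∈ τ, (p.1 = Fm.var 0 ∧ p.2 = Fm.var 0) ∨
      (∃ m m', p = (constFm h m, constFm h m'))) :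
    ℒ.deriv {Fm.var 1} (Fm.var 0) := by
  rw [hiff]
  intro e he A hA v hprem
  obtain ⟨p, hp, h1, h2⟩ := tauApp_elim he
  rcases hnomix p hp with ⟨e1, e2⟩ | ⟨m, m', hpe⟩
  · rw [h1, h2, e1, e2]
  · have hm1 : p.1 = constFm h m := by rw [hpe]
    have hm2 : p.2 = constFm h m' := by rw [hpe]
    rw [h1, h2, hm1, hm2, subst1_constFm h, subst1_constFm h]
    have hmem : (Fm.subst1 0 (Fm.var 1) p.1, Fm.subst1 0 (Fm.var 1) p.2)
        ∈ tauAppSet τ {Fm.var 1} := by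
      rw [mem_tauAppSet h]
      exact ⟨Fm.var 1, rfl, tauApp_intro hp⟩
    have := hprem _ hmem
    rw [hm1, hm2, subst1_constFm h, subst1_constFm h] at this
    exact this

end Forward

section ForwardMain
variable {L : Sig} (h : ∀ f : L.Op, L.ar f = 0) (ℒ : Logic L)
  {τ : Set (Fm L × Fm L)} {K : Set (Alg L)}
set_option linter.unusedSectionVars false

/-- Lemma B': a constant equation `c_i ≈ c_j` in τ also yields `c_j ⊢ c_i`. -/
lemma lemB' (hu : IsUnivalent τ)
    (hiff : ∀ Γ φ, ℒ.deriv Γ φ ↔ ∀ e ∈ tauApp τ φ, eqConseq K (tauAppSet τ Γ) e)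
    (i j : L.Op) (hm : (constFm h i, constFm h j) ∈ τ) :
    ℒ.deriv {constFm h j} (constFm h i) := by
  rw [hiff]
  intro e he A hA v hprem
  have hprem' : ∀ p ∈ τ,
      (Fm.subst1 0 (constFm h j) p.1).eval A v
        = (Fm.subst1 0 (constFm h j) p.2).eval A v := by
    intro p hp
    exact hprem (Fm.subst1 0 (constFm h j) p.1, Fm.subst1 0 (constFm h j) p.2)
      (by rw [mem_tauAppSet h]; exact ⟨constFm h j, rfl, tauApp_intro hp⟩)
  have hij : (constFm h i).eval A v = (constFm h j).eval A v := by
    have := hprem' _ hm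
    rwa [subst1_constFm h, subst1_constFm h] at this
  have key : ∀ ψ : Fm L, ψ.vars ⊆ ({0} : Set ℕ) →
      (Fm.subst1 0 (constFm h i) ψ).eval A v
        = (Fm.subst1 0 (constFm h j) ψ).eval A v := by
    intro ψ hψ
    rcases classify h ψ hψ with rfl | ⟨m, rfl⟩
    · rw [subst1_var0_self h, subst1_var0_self h]; exact hij
    · rw [subst1_constFm h, subst1_constFm h]
  obtain ⟨p, hp, h1, h2⟩ := tauApp_elim he
  rw [h1, h2, key p.1 (hu p hp).1, key p.2 (hu p hp).2]
  exact hprem' p hp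

lemma fwdMain : HasAlgSem ℒ →
    ((ℒ.deriv ∅ (Fm.var 0) ∨ ∃ i : L.Op, ℒ.deriv ∅ (constFm h i)) ∨
     (∃ i j : L.Op, i ≠ j ∧
        ℒ.deriv {Fm.var 0} (constFm h i) ∧ ℒ.deriv {Fm.var 0} (constFm h j)) ∨
     (∃ k i j : L.Op, i ≠ j ∧ ℒ.deriv {Fm.var 0} (constFm h k) ∧
        ℒ.deriv {constFm h i} (constFm h j) ∧
        ℒ.deriv {constFm h j} (constFm h i))) := by
  rintro ⟨τ, K, hu, hiff⟩
  by_cases htriv : ∀ p ∈ τ, p.1 = p.2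
  · -- all equations trivial : ∅ ⊢ x
    left; left
    rw [hiff]
    intro e he A hA v hprem
    obtain ⟨p, hp, h1, h2⟩ := tauApp_elim he
    rw [h1, h2, htriv p hp]
  push_neg at htriv
  obtain ⟨p, hpτ, hpne⟩ := htriv
  -- helper: a mixed equation in τ gives `x ⊢ c`, and then we analyse `∅ ⊢ c_k`
  have mixedCase : ∀ k : L.Op,
      ((Fm.var 0, constFm h k) ∈ τ ∨ (constFm h k, Fm.var 0) ∈ τ) →
      ((ℒ.deriv ∅ (Fm.var 0) ∨ ∃ i : L.Op, ℒ.deriv ∅ (constFm h i)) ∨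
       (∃ i j : L.Op, i ≠ j ∧
          ℒ.deriv {Fm.var 0} (constFm h i) ∧ ℒ.deriv {Fm.var 0} (constFm h j)) ∨
       (∃ k i j : L.Op, i ≠ j ∧ ℒ.deriv {Fm.var 0} (constFm h k) ∧
          ℒ.deriv {constFm h i} (constFm h j) ∧
          ℒ.deriv {constFm h j} (constFm h i))) := by
    intro k hk
    have hxk : ℒ.deriv {Fm.var 0} (constFm h k) := lemA h ℒ hu hiff k hk
    by_cases hthm : ℒ.deriv ∅ (constFm h k)
    · exact Or.inl (Or.inr ⟨k, hthm⟩)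
    rw [hiff] at hthm
    push_neg at hthm
    obtain ⟨e, he, hne⟩ := hthm
    obtain ⟨q, hq, h1, h2⟩ := tauApp_elim he
    have netriv : e.1 ≠ e.2 := by
      intro heq
      exact hne (fun A hA v hp => by rw [heq])
    rcases classify h q.1 (hu q hq).1 with hq1 | ⟨m, hq1⟩ <;>
      rcases classify h q.2 (hu q hq).2 with hq2 | ⟨m', hq2⟩
    · -- (x, x) : e trivial, contradiction
      exact absurd (by rw [h1, h2, hq1, hq2]) netriv
    · -- (x, c_m') : if m' = k trivial else (ii)
      by_cases hmk : m' = k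
      · refine absurd ?_ netriv
        rw [h1, h2, hq1, hq2, hmk, subst1_var0_self h, subst1_constFm h]
      · have hmem : (Fm.var 0, constFm h m') ∈ τ := by
          rw [show (Fm.var 0, constFm h m') = q from Prod.ext (by rw [hq1]) (by rw [hq2])]
          exact hq
        have hxm := lemA h ℒ hu hiff m' (Or.inl hmem)
        exact Or.inr (Or.inl ⟨k, m', fun e => hmk e.symm, hxk, hxm⟩)
    · -- (c_m, x)
      by_cases hmk : m = k
      · refine absurd ?_ netriv
        rw [h1, h2, hq1, hq2, hmk, subst1_var0_self h, subst1_constFm h]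
      · have hmem : (constFm h m, Fm.var 0) ∈ τ := by
          rw [show (constFm h m, Fm.var 0) = q from Prod.ext (by rw [hq1]) (by rw [hq2])]
          exact hq
        have hxm := lemA h ℒ hu hiff m (Or.inr hmem)
        exact Or.inr (Or.inl ⟨k, m, fun e => hmk e.symm, hxk, hxm⟩)
    · -- (c_m, c_m')
      have hmm : m ≠ m' := by
        intro heq
        refine absurd ?_ netriv
        rw [h1, h2, hq1, hq2, heq]
      have hmem : (constFm h m, constFm h m') ∈ τ := by
        rw [show (constFm h m, constFm h m') = q from Prod.ext (by rw [hq1]) (by rw [hq2])]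
        exact hq
      exact Or.inr (Or.inr ⟨k, m, m', hmm, hxk,
        lemB h ℒ hu hiff m m' hmem, lemB' h ℒ hu hiff m m' hmem⟩)
  -- classify the nontrivial equation p
  rcases classify h p.1 (hu p hpτ).1 with hp1 | ⟨i, hp1⟩ <;>
    rcases classify h p.2 (hu p hpτ).2 with hp2 | ⟨j, hp2⟩
  · exact absurd (hp1.trans hp2.symm) hpne
  · exact mixedCase j (Or.inl (by
      rw [show (Fm.var 0, constFm h j) = p from Prod.ext (by rw [hp1]) (by rw [hp2])]
      exact hpτ))
  · exact mixedCase i (Or.inr (by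
      rw [show (constFm h i, Fm.var 0) = p from Prod.ext (by rw [hp1]) (by rw [hp2])]
      exact hpτ))
  · -- p is a nontrivial constant equation (c_i, c_j)
    have hij : i ≠ j := by
      intro heq
      exact hpne (by rw [hp1, hp2, heq])
    have hpmem : (constFm h i, constFm h j) ∈ τ := by
      rw [show (constFm h i, constFm h j) = p from Prod.ext (by rw [hp1]) (by rw [hp2])]
      exact hpτ
    by_cases hmix : ∃ q ∈ τ, ∃ k' : L.Op,
        (q.1 = Fm.var 0 ∧ q.2 = constFm h k') ∨ (q.2 = Fm.var 0 ∧ q.1 = constFm h k')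
    · obtain ⟨q, hq, k', hk'⟩ := hmix
      refine mixedCase k' ?_
      rcases hk' with ⟨e1, e2⟩ | ⟨e1, e2⟩
      · exact Or.inl (by
          rw [show (Fm.var 0, constFm h k') = q from Prod.ext (by rw [e1]) (by rw [e2])]
          exact hq)
      · exact Or.inr (by
          rw [show (constFm h k', Fm.var 0) = q from Prod.ext (by rw [e2]) (by rw [e1])]
          exact hq)
    · -- no mixed equations : use Lemma C
      push_neg at hmix
      have hnomix : ∀ q ∈ τ, (q.1 = Fm.var 0 ∧ q.2 = Fm.var 0) ∨
          (∃ m m', q = (constFm h m, constFm h m')) := by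
        intro q hq
        rcases classify h q.1 (hu q hq).1 with e1 | ⟨m, e1⟩ <;>
          rcases classify h q.2 (hu q hq).2 with e2 | ⟨m', e2⟩
        · exact Or.inl ⟨e1, e2⟩
        · exact absurd e2 ((hmix q hq m').1 e1)
        · exact absurd e1 ((hmix q hq m).2 e2)
        · exact Or.inr ⟨m, m', Prod.ext (by rw [e1]) (by rw [e2])⟩
      have hyx : ℒ.deriv {Fm.var 1} (Fm.var 0) := lemC h ℒ hu hiff hnomix
      -- substitution instances
      have inst : ∀ γ χ : Fm L, (Fm.var 1).subst (fun n => if n = 1 then γ else χ) = γ ∧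
          (Fm.var 0).subst (fun n => if n = 1 then γ else χ) = χ := by
        intro γ χ
        constructor <;> simp [Fm.subst]
      have sub : ∀ γ χ : Fm L, ((fun n => if n = 1 then γ else χ) 0 = χ) := by
        intro γ χ; simp
      have derivInst : ∀ γ χ : Fm L, ℒ.deriv {γ} χ := by
        intro γ χ
        have := ℒ.substInv (fun n => if n = 1 then γ else χ) _ _ hyx
        rw [Set.image_singleton] at this
        rwa [(inst γ χ).1, (inst γ χ).2] at this
      exact Or.inr (Or.inr ⟨i, i, j, hij, derivInst _ _, derivInst _ _, derivInst _ _⟩)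

end ForwardMain

section Setoids
variable {L : Sig}

/-- collapse `T` to a point -/
def s1 (T : Set (Fm L)) : Setoid (Fm L) :=
  ⟨fun a b => a = b ∨ (a ∈ T ∧ b ∈ T), by
    constructor
    · intro a; exact Or.inl rfl
    · rintro a b (rfl | ⟨ha, hb⟩)
      · exact Or.inl rfl
      · exact Or.inr ⟨hb, ha⟩
    · rintro a b c (rfl | ⟨ha, hb⟩) hbc
      · exact hbc
      · rcases hbc with rfl | ⟨hb', hc⟩
        · exact Or.inr ⟨ha, hb⟩
        · exact Or.inr ⟨ha, hc⟩⟩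

lemma s1_rel {T : Set (Fm L)} {a b : Fm L} :
    (s1 T).r a b ↔ (a = b ∨ (a ∈ T ∧ b ∈ T)) := Iff.rfl

/-- collapse `T` to a point and also `{ci, cj}` to a point -/
def s2 (ci cj : Fm L) (T : Set (Fm L)) (hT : ci ∈ T ↔ cj ∈ T) : Setoid (Fm L) :=
  ⟨fun a b => a = b ∨ (a ∈ T ∧ b ∈ T) ∨ ((a = ci ∨ a = cj) ∧ (b = ci ∨ b = cj)), by
    have pair : ∀ x : Fm L, x ∈ T → (x = ci ∨ x = cj) → ci ∈ T ∧ cj ∈ T := by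
      rintro x hx (rfl | rfl)
      · exact ⟨hx, hT.mp hx⟩
      · exact ⟨hT.mpr hx, hx⟩
    constructor
    · intro a; exact Or.inl rfl
    · rintro a b (rfl | ⟨ha, hb⟩ | ⟨ha, hb⟩)
      · exact Or.inl rfl
      · exact Or.inr (Or.inl ⟨hb, ha⟩)
      · exact Or.inr (Or.inr ⟨hb, ha⟩)
    · rintro a b c (rfl | ⟨ha, hb⟩ | ⟨ha, hb⟩) hbc
      · exact hbc
      · rcases hbc with rfl | ⟨hb', hc⟩ | ⟨hb', hc⟩
        · exact Or.inr (Or.inl ⟨ha, hb⟩)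
        · exact Or.inr (Or.inl ⟨ha, hc⟩)
        · rcases hc with rfl | rfl
          · exact Or.inr (Or.inl ⟨ha, (pair b hb hb').1⟩)
          · exact Or.inr (Or.inl ⟨ha, (pair b hb hb').2⟩)
      · rcases hbc with rfl | ⟨hb', hc⟩ | ⟨hb', hc⟩
        · exact Or.inr (Or.inr ⟨ha, hb⟩)
        · rcases ha with rfl | rfl
          · exact Or.inr (Or.inl ⟨(pair b hb' hb).1, hc⟩)
          · exact Or.inr (Or.inl ⟨(pair b hb' hb).2, hc⟩)
        · exact Or.inr (Or.inr ⟨ha, hc⟩)⟩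

lemma s2_rel {ci cj : Fm L} {T : Set (Fm L)} {hT : ci ∈ T ↔ cj ∈ T} {a b : Fm L} :
    (s2 ci cj T hT).r a b ↔
      (a = b ∨ (a ∈ T ∧ b ∈ T) ∨ ((a = ci ∨ a = cj) ∧ (b = ci ∨ b = cj))) := Iff.rfl

end Setoids

section Backward
variable {L : Sig} (h : ∀ f : L.Op, L.ar f = 0) (ℒ : Logic L)
set_option linter.unusedSectionVars false

lemma vars_var0 : (Fm.var 0 : Fm L).vars ⊆ ({0} : Set ℕ) := by
  intro x hx
  exact hx

lemma vars_constFm (m : L.Op) : (constFm h m).vars ⊆ ({0} : Set ℕ) := by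
  rw [show constFm h m = Fm.op m _ from rfl, vars_op h]
  exact Set.empty_subset _

/-- trivial logic case: `∅ ⊢ x` -/
lemma bkTriv (hx : ℒ.deriv ∅ (Fm.var 0)) : HasAlgSem ℒ := by
  refine ⟨{(Fm.var 0, Fm.var 0)}, ∅, ?_, ?_⟩
  · rintro e he
    rw [Set.mem_singleton_iff] at he
    subst he
    exact ⟨vars_var0, vars_var0⟩
  · intro Γ φ
    constructor
    · intro _ e he A hA
      exact absurd hA (Set.notMem_empty A)
    · intro _
      have := ℒ.substInv (fun _ => φ) _ _ hx
      rw [Set.image_empty] at this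
      exact ℒ.mono ∅ Γ φ (Set.empty_subset Γ) this

/-- case `∅ ⊢ c_q` -/
lemma bkC1 (q : L.Op) (hq : ℒ.deriv ∅ (constFm h q)) : HasAlgSem ℒ := by
  classical
  set τ : Set (Fm L × Fm L) := {(Fm.var 0, constFm h q)} with hτ
  refine ⟨τ, {A | ∃ T, IsTheory ℒ T ∧ A = QA h (s1 T)}, ?_, ?_⟩
  · rintro e he
    rw [hτ, Set.mem_singleton_iff] at he
    subst he
    exact ⟨vars_var0, vars_constFm h q⟩
  · intro Γ φ
    constructor
    · -- soundness
      intro hder e he A hA v hprem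
      obtain ⟨T, hT, rfl⟩ := hA
      have hcq : constFm h q ∈ T := hT _ (ℒ.mono ∅ T _ (Set.empty_subset T) hq)
      obtain ⟨p, hp, h1, h2⟩ := tauApp_elim he
      rw [hτ, Set.mem_singleton_iff] at hp
      subst hp
      rw [show ((Fm.var 0, constFm h q) : Fm L × Fm L).1 = Fm.var 0 from rfl,
        subst1_var0_self h] at h1
      rw [show ((Fm.var 0, constFm h q) : Fm L × Fm L).2 = constFm h q from rfl,
        subst1_constFm h] at h2
      have hsub : ∀ γ ∈ Γ, γ.subst (fun n => (v n).out) ∈ T := by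
        intro γ hγ
        have hpm : (Fm.subst1 0 γ (Fm.var 0), Fm.subst1 0 γ (constFm h q))
            ∈ tauAppSet τ Γ := by
          rw [mem_tauAppSet h]
          exact ⟨γ, hγ, tauApp_intro (show (Fm.var 0, constFm h q) ∈ τ by rw [hτ]; rfl)⟩
        have heq := hprem _ hpm
        rw [show (Fm.subst1 0 γ (Fm.var 0), Fm.subst1 0 γ (constFm h q)).1
            = Fm.subst1 0 γ (Fm.var 0) from rfl,
          show (Fm.subst1 0 γ (Fm.var 0), Fm.subst1 0 γ (constFm h q)).2
            = Fm.subst1 0 γ (constFm h q) from rfl,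
          subst1_var0_self h, subst1_constFm h, QA_eval_out h, QA_eval_out h,
          subst_constFm h] at heq
        rcases Quotient.exact heq with heq' | ⟨hmem, _⟩
        · rw [heq']; exact hcq
        · exact hmem
      have himg : Fm.subst (fun n => (v n).out) '' Γ ⊆ T := by
        rintro ψ ⟨γ, hγ, rfl⟩
        exact hsub γ hγ
      have hφT : φ.subst (fun n => (v n).out) ∈ T :=
        theory_deriv ℒ hT himg (ℒ.substInv _ _ _ hder)
      rw [h1, h2, QA_eval_out h, QA_eval_out h, subst_constFm h]
      exact Quotient.sound (Or.inr ⟨hφT, hcq⟩)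
    · -- completeness
      intro hsem
      have hcl : IsTheory ℒ (Lclosure ℒ Γ) := closure_isTheory ℒ Γ
      have hmem : (φ, constFm h q) ∈ tauApp τ φ :=
        ⟨(Fm.var 0, constFm h q), by rw [hτ]; rfl,
          by simp only [subst1_var0_self h, subst1_constFm h]⟩
      have hcqT : constFm h q ∈ Lclosure ℒ Γ :=
        ℒ.mono ∅ Γ _ (Set.empty_subset Γ) hq
      have := hsem _ hmem (QA h (s1 (Lclosure ℒ Γ))) ⟨_, hcl, rfl⟩
        (fun n => Quotient.mk _ (Fm.var n)) ?_
      · rw [show ((φ, constFm h q) : Fm L × Fm L).1 = φ from rfl,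
          show ((φ, constFm h q) : Fm L × Fm L).2 = constFm h q from rfl,
          QA_eval h, QA_eval h, subst_var h, subst_var h] at this
        rcases Quotient.exact this with heq | ⟨hm, _⟩
        · rw [heq]; exact hcqT
        · exact hm
      · intro p hp
        rw [mem_tauAppSet h] at hp
        obtain ⟨γ, hγ, hp⟩ := hp
        obtain ⟨r, hr, h1, h2⟩ := tauApp_elim hp
        rw [hτ, Set.mem_singleton_iff] at hr
        subst hr
        rw [show ((Fm.var 0, constFm h q) : Fm L × Fm L).1 = Fm.var 0 from rfl,
          subst1_var0_self h] at h1
        rw [show ((Fm.var 0, constFm h q) : Fm L × Fm L).2 = constFm h q from rfl,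
          subst1_constFm h] at h2
        rw [h1, h2, QA_eval h, QA_eval h, subst_var h, subst_constFm h]
        exact Quotient.sound (Or.inr ⟨ℒ.axm Γ γ hγ, hcqT⟩)

end Backward

section BackwardC2
variable {L : Sig} (h : ∀ f : L.Op, L.ar f = 0) (ℒ : Logic L)
set_option linter.unusedSectionVars false

/-- case (ii): `x ⊢ c_i`, `x ⊢ c_j`, `i ≠ j`, no theorems -/
lemma bkC2 (hnothm : LacksTheorems ℒ) (i j : L.Op) (hij : i ≠ j)
    (hxi : ℒ.deriv {Fm.var 0} (constFm h i))
    (hxj : ℒ.deriv {Fm.var 0} (constFm h j)) : HasAlgSem ℒ := by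
  classical
  set ci := constFm h i with hci
  set cj := constFm h j with hcj
  set τ : Set (Fm L × Fm L) := {(ci, Fm.var 0), (cj, Fm.var 0)} with hτ
  have memτ : ∀ p ∈ τ, p = (ci, Fm.var 0) ∨ p = (cj, Fm.var 0) := by
    intro p hp
    rw [hτ, Set.mem_insert_iff, Set.mem_singleton_iff] at hp
    exact hp
  have mem1 : (ci, Fm.var 0) ∈ τ := by rw [hτ]; exact Set.mem_insert _ _
  have mem2 : (cj, Fm.var 0) ∈ τ := by
    rw [hτ]; exact Set.mem_insert_iff.mpr (Or.inr rfl)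
  -- τ(φ) membership
  have happ1 : ∀ φ : Fm L, (ci, φ) ∈ tauApp τ φ := by
    intro φ
    exact ⟨(ci, Fm.var 0), mem1, by
      simp only [subst1_var0_self h, hci, subst1_constFm h]⟩
  have happ2 : ∀ φ : Fm L, (cj, φ) ∈ tauApp τ φ := by
    intro φ
    exact ⟨(cj, Fm.var 0), mem2, by
      simp only [subst1_var0_self h, hcj, subst1_constFm h]⟩
  refine ⟨τ, {A | ∃ T, IsTheory ℒ T ∧ A = QA h (s1 T)}, ?_, ?_⟩
  · intro e he
    rcases memτ e he with rfl | rfl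
    · exact ⟨vars_constFm h i, vars_var0⟩
    · exact ⟨vars_constFm h j, vars_var0⟩
  · intro Γ φ
    constructor
    · -- soundness
      intro hder e he A hA v hprem
      obtain ⟨T, hT, rfl⟩ := hA
      rcases Set.eq_empty_or_nonempty Γ with rfl | ⟨γ₀, hγ₀⟩
      · exact absurd ⟨φ, hder⟩ hnothm
      set v' : ℕ → Fm L := fun n => (v n).out with hv'
      -- unpack the premises
      have hpremC : ∀ c : Fm L, (c, Fm.var 0) ∈ τ → ∀ γ ∈ Γ,
          (s1 T).r c (γ.subst v') := by
        intro c hc γ hγ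
        have hpm : (Fm.subst1 0 γ c, Fm.subst1 0 γ (Fm.var 0)) ∈ tauAppSet τ Γ := by
          rw [mem_tauAppSet h]
          exact ⟨γ, hγ, tauApp_intro hc⟩
        have heq := hprem _ hpm
        have hcc : Fm.subst1 0 γ c = c := by
          rcases memτ _ hc with hcp | hcp
          · rw [show c = ci by injection hcp, hci]; exact subst1_constFm h _ i
          · rw [show c = cj by injection hcp, hcj]; exact subst1_constFm h _ j
        rw [show (Fm.subst1 0 γ c, Fm.subst1 0 γ (Fm.var 0)).1 = Fm.subst1 0 γ c from rfl,
          show (Fm.subst1 0 γ c, Fm.subst1 0 γ (Fm.var 0)).2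
            = Fm.subst1 0 γ (Fm.var 0) from rfl,
          hcc, subst1_var0_self h, QA_eval_out h, QA_eval_out h] at heq
        have : (s1 T).r (c.subst v') (γ.subst v') := Quotient.exact heq
        rwa [show c.subst v' = c by
          rcases memτ _ hc with hcp | hcp
          · rw [show c = ci by injection hcp, hci]; exact subst_constFm h _ i
          · rw [show c = cj by injection hcp, hcj]; exact subst_constFm h _ j] at this
      have hri := hpremC ci mem1 γ₀ hγ₀
      have hrj := hpremC cj mem2 γ₀ hγ₀
      -- derive that ci, cj ∈ T
      have hciT : ci ∈ T ∧ cj ∈ T := by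
        rcases hri with hri | ⟨h1, h2⟩
        · rcases hrj with hrj | ⟨h1, h2⟩
          · exact absurd (constFm_inj h (hri.trans hrj.symm)) hij
          · exact ⟨hri ▸ h2, h1⟩
        · rcases hrj with hrj | ⟨h1', h2'⟩
          · exact ⟨h1, hrj ▸ h2⟩
          · exact ⟨h1, h1'⟩
      have hγT : ∀ γ ∈ Γ, γ.subst v' ∈ T := by
        intro γ hγ
        rcases hpremC ci mem1 γ hγ with he' | ⟨_, h2⟩
        · exact he' ▸ hciT.1
        · exact h2
      have hφT : φ.subst v' ∈ T :=
        theory_deriv ℒ hT (by rintro ψ ⟨γ, hγ, rfl⟩; exact hγT γ hγ)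
          (ℒ.substInv _ _ _ hder)
      -- conclude
      obtain ⟨p, hp, h1, h2⟩ := tauApp_elim he
      rcases memτ p hp with rfl | rfl
      · rw [h1, h2, show ((ci, Fm.var 0) : Fm L × Fm L).1 = ci from rfl,
          show ((ci, Fm.var 0) : Fm L × Fm L).2 = Fm.var 0 from rfl,
          subst1_var0_self h, hci, subst1_constFm h, QA_eval_out h, QA_eval_out h,
          subst_constFm h]
        exact Quotient.sound (Or.inr ⟨hciT.1, hφT⟩)
      · rw [h1, h2, show ((cj, Fm.var 0) : Fm L × Fm L).1 = cj from rfl,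
          show ((cj, Fm.var 0) : Fm L × Fm L).2 = Fm.var 0 from rfl,
          subst1_var0_self h, hcj, subst1_constFm h, QA_eval_out h, QA_eval_out h,
          subst_constFm h]
        exact Quotient.sound (Or.inr ⟨hciT.2, hφT⟩)
    · -- completeness
      intro hsem
      rcases Set.eq_empty_or_nonempty Γ with rfl | ⟨γ₀, hγ₀⟩
      · -- Γ = ∅ : derive a contradiction using the empty theory
        exfalso
        have hTe : IsTheory ℒ (∅ : Set (Fm L)) := fun ψ hd => absurd ⟨ψ, hd⟩ hnothm
        have hempty : ∀ p ∈ tauAppSet τ (∅ : Set (Fm L)),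
            p.1.eval (QA h (s1 (∅ : Set (Fm L)))) (fun n => Quotient.mk _ (Fm.var n))
              = p.2.eval (QA h (s1 (∅ : Set (Fm L)))) (fun n => Quotient.mk _ (Fm.var n)) := by
          intro p hp
          rw [mem_tauAppSet h] at hp
          obtain ⟨γ, hγ, _⟩ := hp
          exact absurd hγ (Set.notMem_empty γ)
        have h1 := hsem _ (happ1 φ) (QA h (s1 (∅ : Set (Fm L)))) ⟨∅, hTe, rfl⟩
          (fun n => Quotient.mk _ (Fm.var n)) hempty
        have h2 := hsem _ (happ2 φ) (QA h (s1 (∅ : Set (Fm L)))) ⟨∅, hTe, rfl⟩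
          (fun n => Quotient.mk _ (Fm.var n)) hempty
        rw [show ((ci, φ) : Fm L × Fm L).1 = ci from rfl,
          show ((ci, φ) : Fm L × Fm L).2 = φ from rfl,
          QA_eval h, QA_eval h, subst_var h, subst_var h] at h1
        rw [show ((cj, φ) : Fm L × Fm L).1 = cj from rfl,
          show ((cj, φ) : Fm L × Fm L).2 = φ from rfl,
          QA_eval h, QA_eval h, subst_var h, subst_var h] at h2
        rcases Quotient.exact h1 with he1 | ⟨he1, _⟩
        · rcases Quotient.exact h2 with he2 | ⟨he2, _⟩
          · exact hij (constFm_inj h ((he1.trans he2.symm)))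
          · exact absurd he2 (Set.notMem_empty _)
        · exact absurd he1 (Set.notMem_empty _)
      · -- Γ nonempty
        set T := Lclosure ℒ Γ with hTdef
        have hT : IsTheory ℒ T := closure_isTheory ℒ Γ
        have hciT : ci ∈ T := deriv_of_mem ℒ hγ₀ (derivSingleConst h ℒ i hxi γ₀)
        have hcjT : cj ∈ T := deriv_of_mem ℒ hγ₀ (derivSingleConst h ℒ j hxj γ₀)
        have hprem : ∀ p ∈ tauAppSet τ Γ,
            p.1.eval (QA h (s1 T)) (fun n => Quotient.mk _ (Fm.var n))
              = p.2.eval (QA h (s1 T)) (fun n => Quotient.mk _ (Fm.var n)) := by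
          intro p hp
          rw [mem_tauAppSet h] at hp
          obtain ⟨γ, hγ, hp⟩ := hp
          obtain ⟨r, hr, h1, h2⟩ := tauApp_elim hp
          rcases memτ r hr with rfl | rfl
          · rw [h1, h2, show ((ci, Fm.var 0) : Fm L × Fm L).1 = ci from rfl,
              show ((ci, Fm.var 0) : Fm L × Fm L).2 = Fm.var 0 from rfl,
              subst1_var0_self h, hci, subst1_constFm h,
              QA_eval h, QA_eval h, subst_var h, subst_var h]
            exact Quotient.sound (Or.inr ⟨hciT, ℒ.axm Γ γ hγ⟩)
          · rw [h1, h2, show ((cj, Fm.var 0) : Fm L × Fm L).1 = cj from rfl,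
              show ((cj, Fm.var 0) : Fm L × Fm L).2 = Fm.var 0 from rfl,
              subst1_var0_self h, hcj, subst1_constFm h,
              QA_eval h, QA_eval h, subst_var h, subst_var h]
            exact Quotient.sound (Or.inr ⟨hcjT, ℒ.axm Γ γ hγ⟩)
        have hc := hsem _ (happ1 φ) (QA h (s1 T)) ⟨T, hT, rfl⟩
          (fun n => Quotient.mk _ (Fm.var n)) hprem
        rw [show ((ci, φ) : Fm L × Fm L).1 = ci from rfl,
          show ((ci, φ) : Fm L × Fm L).2 = φ from rfl,
          QA_eval h, QA_eval h, subst_var h, subst_var h] at hc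
        rcases Quotient.exact hc with he | ⟨_, hm⟩
        · rw [← he]; exact hciT
        · exact hm

end BackwardC2

section BackwardC3
variable {L : Sig} (h : ∀ f : L.Op, L.ar f = 0) (ℒ : Logic L)
set_option linter.unusedSectionVars false

/-- case (iii): `x ⊢ c_k`, `c_i ⊣⊢ c_j`, `i ≠ j`, no theorems, and no pair as in (ii) -/
lemma bkC3 (hnothm : LacksTheorems ℒ)
    (hnopair : ¬∃ i' j' : L.Op, i' ≠ j' ∧
      ℒ.deriv {Fm.var 0} (constFm h i') ∧ ℒ.deriv {Fm.var 0} (constFm h j'))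
    (k i j : L.Op) (hij : i ≠ j)
    (hxk : ℒ.deriv {Fm.var 0} (constFm h k))
    (hdij : ℒ.deriv {constFm h i} (constFm h j))
    (hdji : ℒ.deriv {constFm h j} (constFm h i)) : HasAlgSem ℒ := by
  classical
  -- k differs from i and j
  have hki : k ≠ i := by
    rintro rfl
    exact hnopair ⟨k, j, hij, hxk, deriv_cut1 ℒ hdij hxk⟩
  have hkj : k ≠ j := by
    rintro rfl
    exact hnopair ⟨i, k, hij, deriv_cut1 ℒ hdji hxk, hxk⟩
  -- theories are closed under the interderivability of (constFm h i) and (constFm h j)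
  have hTij : ∀ T, IsTheory ℒ T → ((constFm h i) ∈ T ↔ (constFm h j) ∈ T) := by
    intro T hT
    constructor
    · intro hci
      exact theory_deriv ℒ hT (Set.singleton_subset_iff.mpr hci) hdij
    · intro hcj
      exact theory_deriv ℒ hT (Set.singleton_subset_iff.mpr hcj) hdji
  -- anything derivable from (constFm h k) alone is (constFm h k) itself
  have hck : ∀ ψ : Fm L, ℒ.deriv {(constFm h k)} ψ → ψ = (constFm h k) := by
    intro ψ hd
    cases ψ with
    | var n =>
      exfalso
      have h0 : ℒ.deriv {(constFm h k)} (Fm.var 0) := by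
        have := ℒ.substInv (fun m => if m = n then Fm.var 0 else Fm.var m) _ _ hd
        rw [Set.image_singleton] at this
        rw [show Fm.subst (fun m => if m = n then Fm.var 0 else Fm.var m) (constFm h k) = (constFm h k) from
          subst_constFm h _ k] at this
        simpa [Fm.subst] using this
      have hcim : ∀ m : L.Op, ℒ.deriv {Fm.var 0} (constFm h m) := by
        intro m
        have := ℒ.substInv (fun _ => constFm h m) _ _ h0
        rw [Set.image_singleton] at this
        rw [show Fm.subst (fun _ => constFm h m) (constFm h k) = (constFm h k) from subst_constFm h _ k] at this
        exact deriv_cut1 ℒ (by simpa [Fm.subst] using this) hxk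
      exact hnopair ⟨i, j, hij, hcim i, hcim j⟩
    | op m as =>
      rw [← constFm_eq h m as] at hd ⊢
      have hxm : ℒ.deriv {Fm.var 0} (constFm h m) := deriv_cut1 ℒ hd hxk
      by_cases hmk : m = k
      · rw [hmk]
      · exact absurd ⟨k, m, fun e => hmk e.symm, hxk, hxm⟩ hnopair
  set τ : Set (Fm L × Fm L) := {(Fm.var 0, (constFm h k)), ((constFm h i), (constFm h j))} with hτ
  have memτ : ∀ p ∈ τ, p = (Fm.var 0, (constFm h k)) ∨ p = ((constFm h i), (constFm h j)) := by
    intro p hp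
    rw [hτ, Set.mem_insert_iff, Set.mem_singleton_iff] at hp
    exact hp
  have mem1 : (Fm.var 0, (constFm h k)) ∈ τ := by rw [hτ]; exact Set.mem_insert _ _
  have mem2 : ((constFm h i), (constFm h j)) ∈ τ := by rw [hτ]; exact Set.mem_insert_iff.mpr (Or.inr rfl)
  have happ1 : ∀ φ : Fm L, (φ, (constFm h k)) ∈ tauApp τ φ := by
    intro φ
    exact ⟨(Fm.var 0, (constFm h k)), mem1, by
      simp only [subst1_var0_self h, subst1_constFm h]⟩
  have happ2 : ∀ φ : Fm L, ((constFm h i), (constFm h j)) ∈ tauApp τ φ := by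
    intro φ
    exact ⟨((constFm h i), (constFm h j)), mem2, by
      simp only [subst1_constFm h]⟩
  set K : Set (Alg L) := insert (FmAlg L)
    {A | ∃ T, ∃ hT : IsTheory ℒ T, A = QA h (s2 (constFm h i) (constFm h j) T (hTij T hT))} with hK
  refine ⟨τ, K, ?_, ?_⟩
  · intro e he
    rcases memτ e he with rfl | rfl
    · exact ⟨vars_var0, vars_constFm h k⟩
    · exact ⟨vars_constFm h i, vars_constFm h j⟩
  · intro Γ φ
    constructor
    · -- soundness
      intro hder e he A hA v hprem
      rcases Set.eq_empty_or_nonempty Γ with rfl | ⟨γ₀, hγ₀⟩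
      · exact absurd ⟨φ, hder⟩ hnothm
      rw [hK, Set.mem_insert_iff] at hA
      rcases hA with rfl | ⟨T, hT, rfl⟩
      · -- the formula algebra refutes the premise (constFm h i) ≈ (constFm h j)
        exfalso
        have hpm : (Fm.subst1 0 γ₀ (constFm h i), Fm.subst1 0 γ₀ (constFm h j)) ∈ tauAppSet τ Γ := by
          rw [mem_tauAppSet h]
          exact ⟨γ₀, hγ₀, tauApp_intro mem2⟩
        have heq := hprem _ hpm
        rw [show (Fm.subst1 0 γ₀ (constFm h i), Fm.subst1 0 γ₀ (constFm h j)).1 = Fm.subst1 0 γ₀ (constFm h i) from rfl,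
          show (Fm.subst1 0 γ₀ (constFm h i), Fm.subst1 0 γ₀ (constFm h j)).2 = Fm.subst1 0 γ₀ (constFm h j) from rfl,
          subst1_constFm h, subst1_constFm h] at heq
        erw [eval_FmAlg h, eval_FmAlg h, subst_constFm h, subst_constFm h] at heq
        exact hij (constFm_inj h heq)
      · -- quotient algebras
        set v' : ℕ → Fm L := fun n => (v n).out with hv'
        set s := s2 (constFm h i) (constFm h j) T (hTij T hT) with hs
        -- the premises coming from the mixed equation
        have hpremM : ∀ γ ∈ Γ, s.r (γ.subst v') (constFm h k) := by
          intro γ hγ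
          have hpm : (Fm.subst1 0 γ (Fm.var 0), Fm.subst1 0 γ (constFm h k)) ∈ tauAppSet τ Γ := by
            rw [mem_tauAppSet h]
            exact ⟨γ, hγ, tauApp_intro mem1⟩
          have heq := hprem _ hpm
          rw [show (Fm.subst1 0 γ (Fm.var 0), Fm.subst1 0 γ (constFm h k)).1
              = Fm.subst1 0 γ (Fm.var 0) from rfl,
            show (Fm.subst1 0 γ (Fm.var 0), Fm.subst1 0 γ (constFm h k)).2
              = Fm.subst1 0 γ (constFm h k) from rfl,
            subst1_var0_self h, subst1_constFm h,
            QA_eval_out h, QA_eval_out h, subst_constFm h] at heq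
          exact Quotient.exact heq
        -- (constFm h k) is not (constFm h i) nor (constFm h j)
        have hckpair : ¬((constFm h k) = (constFm h i) ∨ (constFm h k) = (constFm h j)) := by
          rintro (hc | hc)
          · exact hki (constFm_inj h hc)
          · exact hkj (constFm_inj h hc)
        -- the conclusion for the mixed equation
        have hconc : s.r (φ.subst v') (constFm h k) := by
          by_cases hkT : (constFm h k) ∈ T
          · have hsub : ∀ γ ∈ Γ, γ.subst v' ∈ T := by
              intro γ hγ
              rcases hpremM γ hγ with heq | ⟨h1, _⟩ | ⟨_, h2⟩
              · rw [heq]; exact hkT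
              · exact h1
              · exact absurd h2 hckpair
            have hφT : φ.subst v' ∈ T :=
              theory_deriv ℒ hT (by rintro ψ ⟨γ, hγ, rfl⟩; exact hsub γ hγ)
                (ℒ.substInv _ _ _ hder)
            exact Or.inr (Or.inl ⟨hφT, hkT⟩)
          · have hsub : ∀ γ ∈ Γ, γ.subst v' = (constFm h k) := by
              intro γ hγ
              rcases hpremM γ hγ with heq | ⟨_, h2⟩ | ⟨_, h2⟩
              · exact heq
              · exact absurd h2 hkT
              · exact absurd h2 hckpair
            have himg : Fm.subst v' '' Γ ⊆ {(constFm h k)} := by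
              rintro ψ ⟨γ, hγ, rfl⟩
              rw [Set.mem_singleton_iff]
              exact hsub γ hγ
            have : ℒ.deriv {(constFm h k)} (φ.subst v') :=
              ℒ.mono _ _ _ himg (ℒ.substInv v' _ _ hder)
            exact Or.inl (hck _ this)
        -- both equations of τ(φ) hold
        obtain ⟨p, hp, h1, h2⟩ := tauApp_elim he
        rcases memτ p hp with rfl | rfl
        · rw [h1, h2, show ((Fm.var 0, (constFm h k)) : Fm L × Fm L).1 = Fm.var 0 from rfl,
            show ((Fm.var 0, (constFm h k)) : Fm L × Fm L).2 = (constFm h k) from rfl,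
            subst1_var0_self h, subst1_constFm h,
            QA_eval_out h, QA_eval_out h, subst_constFm h]
          exact Quotient.sound hconc
        · rw [h1, h2, show (((constFm h i), (constFm h j)) : Fm L × Fm L).1 = (constFm h i) from rfl,
            show (((constFm h i), (constFm h j)) : Fm L × Fm L).2 = (constFm h j) from rfl,
            subst1_constFm h, subst1_constFm h,
            QA_eval_out h, QA_eval_out h, subst_constFm h, subst_constFm h]
          exact Quotient.sound (Or.inr (Or.inr ⟨Or.inl rfl, Or.inr rfl⟩))
    · -- completeness
      intro hsem
      rcases Set.eq_empty_or_nonempty Γ with rfl | ⟨γ₀, hγ₀⟩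
      · -- Γ = ∅ : refute via the formula algebra
        exfalso
        have hempty : ∀ p ∈ tauAppSet τ (∅ : Set (Fm L)),
            p.1.eval (FmAlg L) (fun n => Fm.var n)
              = p.2.eval (FmAlg L) (fun n => Fm.var n) := by
          intro p hp
          rw [mem_tauAppSet h] at hp
          obtain ⟨γ, hγ, _⟩ := hp
          exact absurd hγ (Set.notMem_empty γ)
        have := hsem _ (happ2 φ) (FmAlg L) (by rw [hK]; exact Set.mem_insert _ _)
          (fun n => Fm.var n) hempty
        rw [show (((constFm h i), (constFm h j)) : Fm L × Fm L).1 = (constFm h i) from rfl,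
          show (((constFm h i), (constFm h j)) : Fm L × Fm L).2 = (constFm h j) from rfl,
          eval_FmAlg h, eval_FmAlg h,
          subst_constFm h, subst_constFm h] at this
        exact hij (constFm_inj h this)
      · -- Γ nonempty : use the Lindenbaum quotient
        set T := Lclosure ℒ Γ with hTdef
        have hT : IsTheory ℒ T := closure_isTheory ℒ Γ
        set s := s2 (constFm h i) (constFm h j) T (hTij T hT) with hs
        have hckT : (constFm h k) ∈ T := deriv_of_mem ℒ hγ₀ (derivSingleConst h ℒ k hxk γ₀)
        have hprem : ∀ p ∈ tauAppSet τ Γ,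
            p.1.eval (QA h s) (fun n => Quotient.mk _ (Fm.var n))
              = p.2.eval (QA h s) (fun n => Quotient.mk _ (Fm.var n)) := by
          intro p hp
          rw [mem_tauAppSet h] at hp
          obtain ⟨γ, hγ, hp⟩ := hp
          obtain ⟨r, hr, h1, h2⟩ := tauApp_elim hp
          rcases memτ r hr with rfl | rfl
          · rw [h1, h2, show ((Fm.var 0, (constFm h k)) : Fm L × Fm L).1 = Fm.var 0 from rfl,
              show ((Fm.var 0, (constFm h k)) : Fm L × Fm L).2 = (constFm h k) from rfl,
              subst1_var0_self h, subst1_constFm h,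
              QA_eval h, QA_eval h, subst_var h, subst_var h]
            exact Quotient.sound (Or.inr (Or.inl ⟨ℒ.axm Γ γ hγ, hckT⟩))
          · rw [h1, h2, show (((constFm h i), (constFm h j)) : Fm L × Fm L).1 = (constFm h i) from rfl,
              show (((constFm h i), (constFm h j)) : Fm L × Fm L).2 = (constFm h j) from rfl,
              subst1_constFm h, subst1_constFm h,
              QA_eval h, QA_eval h, subst_var h, subst_var h]
            exact Quotient.sound (Or.inr (Or.inr ⟨Or.inl rfl, Or.inr rfl⟩))
        have hc := hsem _ (happ1 φ) (QA h s)
          (by rw [hK]; exact Set.mem_insert_iff.mpr (Or.inr ⟨T, hT, rfl⟩))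
          (fun n => Quotient.mk _ (Fm.var n)) hprem
        rw [show ((φ, (constFm h k)) : Fm L × Fm L).1 = φ from rfl,
          show ((φ, (constFm h k)) : Fm L × Fm L).2 = (constFm h k) from rfl,
          QA_eval h, QA_eval h, subst_var h, subst_var h] at hc
        rcases Quotient.exact hc with heq | ⟨hm, _⟩ | ⟨_, hpr⟩
        · rw [heq]; exact hckT
        · exact hm
        · exact absurd hpr (by
            rintro (hc' | hc')
            · exact hki (constFm_inj h hc')
            · exact hkj (constFm_inj h hc'))

end BackwardC3
/-- A logic in a language with constant symbols only has an algebraic semantics iff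
(i) `∅ ⊢ x` or `∅ ⊢ cᵢ` for some `i`; or (ii) `x ⊢ cᵢ` and `x ⊢ cⱼ` for some `i ≠ j`; or
(iii) `x ⊢ c_k` for some `k` and `cᵢ ⊣⊢ cⱼ` for some `i ≠ j`. -/
theorem constants_only_alg_sem_iff {L : Sig} (h : ∀ f : L.Op, L.ar f = 0)
    (ℒ : Logic L) :
    HasAlgSem ℒ ↔
      ((ℒ.deriv ∅ (Fm.var 0) ∨ ∃ i : L.Op, ℒ.deriv ∅ (constFm h i)) ∨
       (∃ i j : L.Op, i ≠ j ∧
          ℒ.deriv {Fm.var 0} (constFm h i) ∧ ℒ.deriv {Fm.var 0} (constFm h j)) ∨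
       (∃ k i j : L.Op, i ≠ j ∧ ℒ.deriv {Fm.var 0} (constFm h k) ∧
          ℒ.deriv {constFm h i} (constFm h j) ∧
          ℒ.deriv {constFm h j} (constFm h i))) := by
  constructor
  · exact fwdMain h ℒ
  · intro hcond
    by_cases hthm : ∃ φ, ℒ.deriv ∅ φ
    · obtain ⟨φ₀, hφ₀⟩ := hthm
      cases φ₀ with
      | var n =>
        apply bkTriv ℒ
        have := ℒ.substInv (fun _ => Fm.var 0) _ _ hφ₀
        rw [Set.image_empty] at this
        simpa [Fm.subst] using this
      | op m as =>
        exact bkC1 h ℒ m (by rwa [constFm_eq h m as])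
    · rcases hcond with (hx | ⟨i, hi⟩) | ⟨i, j, hij, hxi, hxj⟩ |
        ⟨k, i, j, hij, hxk, hdij, hdji⟩
      · exact absurd ⟨_, hx⟩ hthm
      · exact absurd ⟨_, hi⟩ hthm
      · exact bkC2 h ℒ hthm i j hij hxi hxj
      · by_cases hpair : ∃ i' j' : L.Op, i' ≠ j' ∧
            ℒ.deriv {Fm.var 0} (constFm h i') ∧ ℒ.deriv {Fm.var 0} (constFm h j')
        · obtain ⟨i', j', hij', h1, h2⟩ := hpair
          exact bkC2 h ℒ hthm i' j' hij' h1 h2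
        · exact bkC3 h ℒ hthm hpair k i j hij hxk hdij hdji
end

section
/- Let ⊢ be a mono-unary logic (language consisting of a single unary connective □ only). Then ⊢ has an algebraic semantics if and only if x ⊢ □x; moreover, when x ⊢ □x, the set τ = { x ≈ □x } yields a τ-algebraic semantics. -/
namespace MU

variable {L : Sig}

lemma eval_subst (A : Alg L) (v : ℕ → A.carrier) (σ : ℕ → Fm L) :
    ∀ φ : Fm L, (φ.subst σ).eval A v = φ.eval A (fun n => (σ n).eval A v)
  | .var n => rfl
  | .op f as => by
    show A.interp f _ = A.interp f _
    congr 1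
    funext i
    exact eval_subst A v σ (as i)

lemma eval_congr (A : Alg L) {v w : ℕ → A.carrier} :
    ∀ φ : Fm L, (∀ n ∈ φ.vars, v n = w n) → φ.eval A v = φ.eval A w
  | .var n, h => h n rfl
  | .op f as, h => by
    show A.interp f _ = A.interp f _
    congr 1
    funext i
    exact eval_congr A (as i) (fun n hn => h n (Set.mem_iUnion.2 ⟨i, hn⟩))

lemma subst_of_var (σ : ℕ → Fm L) (hσ : ∀ n, σ n = Fm.var n) :
    ∀ φ : Fm L, φ.subst σ = φ
  | .var n => hσ n
  | .op f as => by
    show Fm.op f _ = _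
    congr 1
    funext i
    exact subst_of_var σ hσ (as i)

lemma subst1_var0 (φ : Fm L) : Fm.subst1 0 (Fm.var 0) φ = φ := by
  apply subst_of_var
  intro n
  by_cases h : n = 0 <;> simp [h]

def fsize : Fm L → ℕ
  | .var _ => 0
  | .op _ as => (Finset.univ.sup fun i => fsize (as i)) + 1




section Mono

def i0 (b : L.Op) (hb : ∀ f : L.Op, f = b) (h1 : L.ar b = 1) (f : L.Op) :
    Fin (L.ar f) := ⟨0, by rw [hb f, h1]; omega⟩

lemma finEq (b : L.Op) (hb : ∀ f : L.Op, f = b) (h1 : L.ar b = 1)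
    (f : L.Op) (i j : Fin (L.ar f)) : i = j := by
  have hf : L.ar f = 1 := by rw [hb f, h1]
  have hi := i.isLt; have hj := j.isLt
  exact Fin.ext (by omega)

/-- `□ᴬ`. -/
def boxA (b : L.Op) (A : Alg L) (a : A.carrier) : A.carrier := A.interp b (fun _ => a)

lemma eval_op (b : L.Op) (hb : ∀ f : L.Op, f = b) (h1 : L.ar b = 1)
    (A : Alg L) (v : ℕ → A.carrier) (f : L.Op) (as : Fin (L.ar f) → Fm L)
    (i : Fin (L.ar f)) :
    Fm.eval A v (.op f as) = boxA b A ((as i).eval A v) := by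
  cases hb f
  show A.interp b (fun j => (as j).eval A v) = A.interp b (fun _ => (as i).eval A v)
  congr 1
  funext j
  rw [finEq b hb h1 b j i]

lemma fsize_box (b : L.Op) (hb : ∀ f : L.Op, f = b) (h1 : L.ar b = 1) (φ : Fm L) :
    fsize (Fm.op b (fun _ => φ)) = fsize φ + 1 := by
  show (Finset.univ.sup fun _ : Fin (L.ar b) => fsize φ) + 1 = _
  rw [Finset.sup_const ⟨i0 b hb h1 b, Finset.mem_univ _⟩]

lemma box_ne (b : L.Op) (hb : ∀ f : L.Op, f = b) (h1 : L.ar b = 1) (φ : Fm L) :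
    Fm.op b (fun _ => φ) ≠ φ := by
  intro h
  have := fsize_box b hb h1 φ
  rw [h] at this
  omega

lemma eval_box_comm (b : L.Op) (hb : ∀ f : L.Op, f = b) (h1 : L.ar b = 1)
    (A : Alg L) (a : A.carrier) :
    ∀ φ : Fm L, φ.vars ⊆ ({0} : Set ℕ) →
      φ.eval A (fun _ => boxA b A a) = boxA b A (φ.eval A (fun _ => a))
  | .var n, _ => rfl
  | .op f as, h => by
    rw [eval_op b hb h1 A _ f as (i0 b hb h1 f), eval_op b hb h1 A _ f as (i0 b hb h1 f)]
    congr 1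
    exact eval_box_comm b hb h1 A a (as (i0 b hb h1 f))
      (fun n hn => h (Set.mem_iUnion.2 ⟨i0 b hb h1 f, hn⟩))

/-- evaluating `ψ(□x/x)` is `□` of evaluating `ψ`, for `ψ` in variable `0`. -/
lemma subst_box_eval (b : L.Op) (hb : ∀ f : L.Op, f = b) (h1 : L.ar b = 1)
    (A : Alg L) (v : ℕ → A.carrier) (ψ : Fm L)
    (hψ : ψ.vars ⊆ ({0} : Set ℕ)) :
    (Fm.subst1 0 (Fm.op b (fun _ => Fm.var 0)) ψ).eval A v = boxA b A (ψ.eval A v) := by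
  unfold Fm.subst1
  rw [eval_subst]
  have step1 : ψ.eval A (fun n =>
      ((if n = 0 then Fm.op b (fun _ => Fm.var 0) else Fm.var n).eval A v))
      = ψ.eval A (fun _ => boxA b A (v 0)) := by
    apply eval_congr
    intro n hn
    have : n = 0 := hψ hn
    subst this
    simp only [if_pos rfl]
    exact eval_op b hb h1 A v b _ (i0 b hb h1 b)
  rw [step1, eval_box_comm b hb h1 A (v 0) ψ hψ]
  congr 1
  apply eval_congr
  intro n hn
  have : n = 0 := hψ hn
  subst this
  rfl

end Mono

section QuotCon
variable {L : Sig}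

/-- Relation collapsing the theory `T` to a point. -/
def rT (T : Set (Fm L)) : Fm L → Fm L → Prop := fun φ ψ => φ ∈ T ∧ ψ ∈ T

/-- `□` on the quotient. -/
def boxq (b : L.Op) (T : Set (Fm L)) (hT : ∀ ψ ∈ T, Fm.op b (fun _ => ψ) ∈ T) :
    Quot (rT T) → Quot (rT T) :=
  Quot.lift (fun φ => Quot.mk _ (Fm.op b (fun _ => φ)))
    (fun φ ψ h => Quot.sound ⟨hT φ h.1, hT ψ h.2⟩)

/-- The quotient algebra. -/
@[reducible]
def AlgT (b : L.Op) (hb : ∀ f : L.Op, f = b) (h1 : L.ar b = 1)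
    (T : Set (Fm L)) (hT : ∀ ψ ∈ T, Fm.op b (fun _ => ψ) ∈ T) : Alg L :=
  ⟨Quot (rT T), fun f as => boxq b T hT (as (i0 b hb h1 f))⟩

lemma boxA_AlgT (b : L.Op) (hb : ∀ f : L.Op, f = b) (h1 : L.ar b = 1)
    (T : Set (Fm L)) (hT : ∀ ψ ∈ T, Fm.op b (fun _ => ψ) ∈ T)
    (a : Quot (rT T)) :
    boxA b (AlgT b hb h1 T hT) a = boxq b T hT a := rfl

lemma fixed_iff (b : L.Op) (hb : ∀ f : L.Op, f = b) (h1 : L.ar b = 1)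
    (T : Set (Fm L)) (hT : ∀ ψ ∈ T, Fm.op b (fun _ => ψ) ∈ T) (φ : Fm L) :
    boxq b T hT (Quot.mk _ φ) = Quot.mk _ φ ↔ φ ∈ T := by
  constructor
  · intro h
    have hP : ∀ (x y : Fm L), rT T x y →
        (x = φ ∨ (x ∈ T ∧ φ ∈ T)) = (y = φ ∨ (y ∈ T ∧ φ ∈ T)) := by
      intro x y hxy
      apply propext
      constructor
      · rintro (rfl | ⟨_, hφ⟩)
        · exact Or.inr ⟨hxy.2, hxy.1⟩
        · exact Or.inr ⟨hxy.2, hφ⟩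
      · rintro (rfl | ⟨_, hφ⟩)
        · exact Or.inr ⟨hxy.1, hxy.2⟩
        · exact Or.inr ⟨hxy.1, hφ⟩
    have h2 : Quot.lift (fun ψ => ψ = φ ∨ (ψ ∈ T ∧ φ ∈ T)) hP
        (boxq b T hT (Quot.mk _ φ)) := by
      rw [h]; exact Or.inl rfl
    have h3 : Fm.op b (fun _ => φ) = φ ∨ (Fm.op b (fun _ => φ) ∈ T ∧ φ ∈ T) := h2
    rcases h3 with h3 | h3
    · exact absurd h3 (box_ne b hb h1 φ)
    · exact h3.2
  · intro h
    exact Quot.sound ⟨hT φ h, h⟩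

lemma eval_mk (b : L.Op) (hb : ∀ f : L.Op, f = b) (h1 : L.ar b = 1)
    (T : Set (Fm L)) (hT : ∀ ψ ∈ T, Fm.op b (fun _ => ψ) ∈ T) (u : ℕ → Fm L) :
    ∀ ψ : Fm L, ψ.eval (AlgT b hb h1 T hT) (fun n => Quot.mk (rT T) (u n))
      = Quot.mk (rT T) (ψ.subst u)
  | .var n => rfl
  | .op f as => by
    rw [eval_op b hb h1 (AlgT b hb h1 T hT) _ f as (i0 b hb h1 f)]
    rw [boxA_AlgT, eval_mk b hb h1 T hT u (as (i0 b hb h1 f))]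
    show Quot.mk (rT T) (Fm.op b (fun _ => (as (i0 b hb h1 f)).subst u))
      = Quot.mk (rT T) (Fm.op f (fun i => (as i).subst u))
    cases hb f
    have he : (fun _ : Fin (L.ar b) => (as (i0 b hb h1 b)).subst u)
        = (fun i => (as i).subst u) := by
      funext i; rw [finEq b hb h1 b (i0 b hb h1 b) i]
    rw [he]

end QuotCon

section Main
variable {L : Sig}

lemma deriv_box (b : L.Op) (ℒ : Logic L)
    (hd : ℒ.deriv {Fm.var 0} (Fm.op b (fun _ => Fm.var 0))) (ψ : Fm L) :
    ℒ.deriv {ψ} (Fm.op b (fun _ => ψ)) := by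
  have h := ℒ.substInv (fun _ => ψ) _ _ hd
  rw [Set.image_singleton] at h
  exact h

/-- The class of algebras on which fixed points are closed under the rules of `ℒ`. -/
def KSet (b : L.Op) (ℒ : Logic L) : Set (Alg L) :=
  {A | ∀ Δ ψ, ℒ.deriv Δ ψ → ∀ v : ℕ → A.carrier,
    (∀ δ ∈ Δ, boxA b A (δ.eval A v) = δ.eval A v) → boxA b A (ψ.eval A v) = ψ.eval A v}

lemma hT_closed (b : L.Op) (ℒ : Logic L)
    (hd : ℒ.deriv {Fm.var 0} (Fm.op b (fun _ => Fm.var 0))) (Γ : Set (Fm L)) :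
    ∀ ψ ∈ {ψ | ℒ.deriv Γ ψ}, Fm.op b (fun _ => ψ) ∈ {ψ | ℒ.deriv Γ ψ} := by
  intro ψ hψ
  exact ℒ.cut {ψ} Γ _ (deriv_box b ℒ hd ψ)
    (fun γ hγ => by obtain rfl : γ = ψ := hγ; exact hψ)

lemma AlgT_mem (b : L.Op) (hb : ∀ f : L.Op, f = b) (h1 : L.ar b = 1)
    (ℒ : Logic L) (Γ : Set (Fm L))
    (hd : ℒ.deriv {Fm.var 0} (Fm.op b (fun _ => Fm.var 0))) :
    AlgT b hb h1 {ψ | ℒ.deriv Γ ψ} (hT_closed b ℒ hd Γ) ∈ KSet b ℒ := by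
  set T : Set (Fm L) := {ψ | ℒ.deriv Γ ψ} with hTdef
  set hTc := hT_closed b ℒ hd Γ
  intro Δ ψ hder v hprem
  choose u hu using fun n => Quot.exists_rep (v n)
  have hv : v = fun n => Quot.mk (rT T) (u n) := funext fun n => (hu n).symm
  subst hv
  rw [boxA_AlgT, eval_mk b hb h1 T hTc u ψ]
  apply (fixed_iff b hb h1 T hTc (ψ.subst u)).2
  apply ℒ.cut (Fm.subst u '' Δ) Γ _ (ℒ.substInv u Δ ψ hder)
  rintro γ ⟨δ, hδ, rfl⟩
  have h := hprem δ hδ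
  rw [boxA_AlgT, eval_mk b hb h1 T hTc u δ] at h
  exact (fixed_iff b hb h1 T hTc (δ.subst u)).1 h

lemma tauApp_eq (b : L.Op) (φ : Fm L) :
    tauApp {(Fm.var 0, Fm.op b (fun _ => Fm.var 0))} φ
      = {(φ, Fm.op b (fun _ => φ))} := by
  simp [tauApp, Fm.subst1, Fm.subst]

/-- Main completeness/soundness lemma. -/
lemma main_iff (b : L.Op) (hb : ∀ f : L.Op, f = b) (h1 : L.ar b = 1)
    (ℒ : Logic L) (hd : ℒ.deriv {Fm.var 0} (Fm.op b (fun _ => Fm.var 0))) :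
    IsTauAlgSem ℒ {(Fm.var 0, Fm.op b (fun _ => Fm.var 0))} (KSet b ℒ) := by
  constructor
  · rintro e he
    obtain rfl : e = (Fm.var 0, Fm.op b (fun _ => Fm.var 0)) := he
    constructor
    · intro n hn; exact hn
    · intro n hn
      obtain ⟨i, hi⟩ := Set.mem_iUnion.1 hn
      exact hi
  · intro Γ φ
    constructor
    · -- soundness
      intro hder e he A hA v hv
      rw [tauApp_eq] at he
      obtain rfl : e = (φ, Fm.op b (fun _ => φ)) := he
      show φ.eval A v = (Fm.op b (fun _ => φ)).eval A v
      rw [eval_op b hb h1 A v b (fun _ => φ) (i0 b hb h1 b)]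
      refine (hA Γ φ hder v ?_).symm
      intro γ hγ
      have hmem : ((γ, Fm.op b (fun _ => γ)) : Fm L × Fm L)
          ∈ tauAppSet {(Fm.var 0, Fm.op b (fun _ => Fm.var 0))} Γ := by
        apply Set.mem_iUnion₂.2
        exact ⟨γ, hγ, by rw [tauApp_eq]; rfl⟩
      have h := hv _ hmem
      simp only at h
      rw [eval_op b hb h1 A v b (fun _ => γ) (i0 b hb h1 b)] at h
      exact h.symm
    · -- completeness
      intro hRHS
      set T : Set (Fm L) := {ψ | ℒ.deriv Γ ψ} with hTdef
      set hTc := hT_closed b ℒ hd Γ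
      set A := AlgT b hb h1 T hTc with hA
      have key := hRHS (φ, Fm.op b (fun _ => φ))
        (by rw [tauApp_eq]; rfl) A (AlgT_mem b hb h1 ℒ Γ hd)
        (fun n => Quot.mk (rT T) (Fm.var n))
      have hsub : ∀ ψ : Fm L, ψ.subst Fm.var = ψ := subst_of_var Fm.var (fun _ => rfl)
      have hconc : φ.eval A (fun n => Quot.mk (rT T) (Fm.var n))
          = (Fm.op b (fun _ => φ)).eval A (fun n => Quot.mk (rT T) (Fm.var n)) := by
        apply key
        intro p hp
        obtain ⟨γ, hγ, hpmem⟩ := Set.mem_iUnion₂.1 hp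
        rw [tauApp_eq] at hpmem
        obtain rfl : p = (γ, Fm.op b (fun _ => γ)) := hpmem
        show γ.eval A _ = (Fm.op b (fun _ => γ)).eval A _
        rw [eval_op b hb h1 A _ b (fun _ => γ) (i0 b hb h1 b), boxA_AlgT,
          eval_mk b hb h1 T hTc Fm.var γ, hsub γ]
        exact ((fixed_iff b hb h1 T hTc γ).2 (ℒ.axm Γ γ hγ)).symm
      rw [eval_op b hb h1 A _ b (fun _ => φ) (i0 b hb h1 b), boxA_AlgT,
        eval_mk b hb h1 T hTc Fm.var φ, hsub φ] at hconc
      exact (fixed_iff b hb h1 T hTc φ).1 hconc.symm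

end Main
end MU

/-- A mono-unary logic (language consisting of a single unary connective `□` only) has an
algebraic semantics iff `x ⊢ □x`; moreover, when `x ⊢ □x`, the set `τ = { x ≈ □x }`
yields a `τ`-algebraic semantics. -/
theorem mono_unary_alg_sem_iff {L : Sig} (b : L.Op) (hb : ∀ f : L.Op, f = b)
    (h1 : L.ar b = 1) (ℒ : Logic L) :
    (HasAlgSem ℒ ↔ ℒ.deriv {Fm.var 0} (Fm.op b (fun _ => Fm.var 0))) ∧
    (ℒ.deriv {Fm.var 0} (Fm.op b (fun _ => Fm.var 0)) →
      ∃ K : Set (Alg L),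
        IsTauAlgSem ℒ {(Fm.var 0, Fm.op b (fun _ => Fm.var 0))} K) := by
  constructor
  · constructor
    · -- forward: any algebraic semantics forces x ⊢ □x
      rintro ⟨τ, K, huni, hiff⟩
      apply (hiff {Fm.var 0} (Fm.op b (fun _ => Fm.var 0))).2
      intro e he A hA v hv
      obtain ⟨p, hp, rfl⟩ := he
      show (Fm.subst1 0 _ p.1).eval A v = (Fm.subst1 0 _ p.2).eval A v
      rw [MU.subst_box_eval b hb h1 A v p.1 (huni p hp).1,
        MU.subst_box_eval b hb h1 A v p.2 (huni p hp).2]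
      congr 1
      have hmem : ((Fm.subst1 0 (Fm.var 0) p.1, Fm.subst1 0 (Fm.var 0) p.2) : Fm L × Fm L)
          ∈ tauAppSet τ {Fm.var 0} :=
        Set.mem_iUnion₂.2 ⟨Fm.var 0, rfl, ⟨p, hp, rfl⟩⟩
      have h := hv _ hmem
      rwa [MU.subst1_var0, MU.subst1_var0] at h
    · intro hd
      exact ⟨_, _, MU.main_iff b hb h1 ℒ hd⟩
  · intro hd
    exact ⟨MU.KSet b ℒ, MU.main_iff b hb h1 ℒ hd⟩
end
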